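/- Let x₁ ≥ x₂ ≥ … ≥ x_n ≥ 0 and let ξ₁,…,ξ_n : (0,1) → {x₁,…,x_n} be independent random variables such that ∑_{k=1}^n m({t : ξ_k(t) = x_j}) = 1 for every j = 1,…,n. For t ∈ (0,1) let (η_k(t))_{k=1}^n be the decreasing rearrangement of (ξ_k(t))_{k=1}^n. Then m({t : η_k(t) ≥ x_{4k−3} for all 1 ≤ k ≤ ⌊(n+3)/4⌋}) > 1/10. -/

import Mathlib

open MeasureTheory ProbabilityTheory
open scoped ENNReal

/-- Lebesgue measure on `(0,1)`. -/
noncomputable def P : Measure ℝ := volume.restrict (Set.Ioo 0 1)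

/-- Distribution function of a finite tuple: `d_v(t) = Card {k : v k > t}`. -/
noncomputable def tupleDist {n : ℕ} (v : Fin n → ℝ) (t : ℝ) : ℕ :=
  (Finset.univ.filter fun k => t < v k).card

/-- Decreasing rearrangement of a finite tuple: `μ(k, v)` is the `(k+1)`-th
largest entry. -/
noncomputable def tupleMu {n : ℕ} (v : Fin n → ℝ) (k : ℕ) : ℝ :=
  sInf {l : ℝ | 0 ≤ l ∧ tupleDist v l ≤ k}

instance : IsProbabilityMeasure P :=
  ⟨by simp [P, Real.volume_Ioo]⟩

lemma tupleMu_lt_imp {n : ℕ} (v : Fin n → ℝ) (k : ℕ) (c : ℝ)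
    (h : tupleMu v k < c) : (Finset.univ.filter fun i => c ≤ v i).card ≤ k := by
  classical
  set S : Set ℝ := {l : ℝ | 0 ≤ l ∧ tupleDist v l ≤ k} with hS
  have hne : S.Nonempty := by
    refine ⟨∑ i, |v i|, Finset.sum_nonneg fun i _ => abs_nonneg _, ?_⟩
    have hemp : (Finset.univ.filter fun i => (∑ j, |v j|) < v i) = ∅ := by
      apply Finset.filter_false_of_mem
      intro i _
      push_neg
      exact le_trans (le_abs_self _)
        (Finset.single_le_sum (f := fun j => |v j|) (fun j _ => abs_nonneg _)
          (Finset.mem_univ i))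
    simp [tupleDist, hemp]
  have hbdd : BddBelow S := ⟨0, fun l hl => hl.1⟩
  obtain ⟨l, hlS, hlc⟩ := (csInf_lt_iff hbdd hne).mp h
  refine le_trans (Finset.card_le_card ?_) hlS.2
  intro i hi
  simp only [Finset.mem_filter] at *
  exact ⟨hi.1, lt_of_lt_of_le hlc hi.2⟩
/-- let `x 0 ≥ x 1 ≥ … ≥ x (n-1) ≥ 0` (written here `0`-based) and
let `ξ_1,…,ξ_n` be independent random variables on `(0,1)` with values in
`{x 0,…,x (n-1)}` such that `∑_k m{ξ_k = x j} = 1` for every `j < n`.  If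
`η(t)` denotes the decreasing rearrangement of `(ξ_k(t))_k`, then
`m{t : η_k(t) ≥ x_{4k-3} for all 1 ≤ k ≤ ⌊(n+3)/4⌋} > 1/10` (in `0`-based
indexing: `tupleMu (ξ·t) k ≥ x (4k)` for all `k < ⌊(n+3)/4⌋`). -/
theorem stmt_14 (n : ℕ) (hn : 0 < n) (x : ℕ → ℝ)
    (hxpos : ∀ j < n, 0 ≤ x j)
    (hxmono : ∀ i j : ℕ, i ≤ j → j < n → x j ≤ x i)
    (ξ : Fin n → ℝ → ℝ) (hmeas : ∀ k, Measurable (ξ k))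
    (hval : ∀ (k : Fin n) (t : ℝ), t ∈ Set.Ioo (0 : ℝ) 1 → ∃ j < n, ξ k t = x j)
    (hindep : iIndepFun (m := fun _ => Real.measurableSpace) ξ P)
    (hdistr : ∀ j < n, ∑ k : Fin n, P {t | ξ k t = x j} = 1) :
    ENNReal.ofReal (1 / 10) <
      P {t | ∀ k : ℕ, k < (n + 3) / 4 → x (4 * k) ≤ tupleMu (fun i => ξ i t) k} := by
  classical
  have hmeasP : ∀ (i : Fin n) (v : ℝ), MeasurableSet {t : ℝ | ξ i t = v} := fun i v =>
    (hmeas i) (measurableSet_singleton v)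
  have hIoo : P (Set.Ioo (0:ℝ) 1) = 1 := by
    simp [P, Measure.restrict_apply, Real.volume_Ioo]
  -- injectivity of x on range n
  set V : Finset ℝ := (Finset.range n).image x with hV
  have key1 : ∀ i : Fin n, ∑ v ∈ V, P {t : ℝ | ξ i t = v} = 1 := by
    intro i
    have hdisj : (V : Set ℝ).PairwiseDisjoint (fun v => {t : ℝ | ξ i t = v}) := by
      intro a _ b _ hab
      simp only [Function.onFun, Set.disjoint_left]
      rintro t (ht : ξ i t = a) (ht' : ξ i t = b)
      exact hab (ht ▸ ht')
    rw [← measure_biUnion_finset hdisj (fun v _ => hmeasP i v)]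
    apply le_antisymm
    · exact le_trans (measure_mono (Set.subset_univ _)) (by simp)
    · rw [← hIoo]
      apply measure_mono
      intro t ht
      obtain ⟨j, hj, hje⟩ := hval i t ht
      exact Set.mem_biUnion (Finset.mem_image_of_mem x (Finset.mem_range.mpr hj)) hje
  have key2 : V.card = n := by
    have hA : ∑ v ∈ V, ∑ i : Fin n, P {t : ℝ | ξ i t = v} = (n : ℝ≥0∞) := by
      rw [← Finset.sum_comm]
      simp [key1]
    have hB : ∀ v ∈ V, ∑ i : Fin n, P {t : ℝ | ξ i t = v} = 1 := by
      intro v hv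
      obtain ⟨j, hj, rfl⟩ := Finset.mem_image.mp hv
      exact hdistr j (Finset.mem_range.mp hj)
    rw [Finset.sum_congr rfl hB, Finset.sum_const, nsmul_eq_mul, mul_one] at hA
    exact_mod_cast hA
  have hx_inj : Set.InjOn x ↑(Finset.range n) :=
    Finset.injOn_of_card_image_eq (by rw [← hV, key2, Finset.card_range])
  -- numeric facts
  have hexp1 : (2.7182818283:ℝ) < Real.exp 1 := Real.exp_one_gt_d9
  have hinv : Real.exp (-1) ≤ 0.37 := by
    have hm : Real.exp (-1) * Real.exp 1 = 1 := by
      rw [← Real.exp_add]; norm_num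
    nlinarith [Real.exp_pos (-1)]
  have h58 : Real.exp (-0.63) ≤ 0.58 := by
    have h315 : (1.315:ℝ) ≤ Real.exp 0.315 := by
      nlinarith [Real.add_one_le_exp (0.315:ℝ)]
    have he63 : Real.exp 0.63 = Real.exp 0.315 * Real.exp 0.315 := by
      rw [← Real.exp_add]; norm_num
    have hm : Real.exp (-0.63) * Real.exp 0.63 = 1 := by
      rw [← Real.exp_add]; norm_num
    nlinarith [Real.exp_pos (-0.63), Real.exp_pos 0.315]
  have h33 : Real.exp (-1.52) ≤ 0.33 := by
    have h76 : (1.76:ℝ) ≤ Real.exp 0.76 := by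
      nlinarith [Real.add_one_le_exp (0.76:ℝ)]
    have he152 : Real.exp 1.52 = Real.exp 0.76 * Real.exp 0.76 := by
      rw [← Real.exp_add]; norm_num
    have hm : Real.exp (-1.52) * Real.exp 1.52 = 1 := by
      rw [← Real.exp_add]; norm_num
    nlinarith [Real.exp_pos (-1.52), Real.exp_pos 0.76]
  -- indicator random variables
  set Xf : ℕ → Fin n → ℝ → ℝ :=
    fun k i => Set.indicator (ξ i ⁻¹' Set.Ici (x (4*k))) (fun _ => (1:ℝ)) with hXf
  have hbound : ∀ k, k < (n+3)/4 →
      P {t : ℝ | (∑ i : Fin n, Xf k i) t ≤ (k:ℝ)} ≤ ENNReal.ofReal (0.58 * 0.33 ^ k) := by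
    intro k hk
    have h4k : 4 * k < n := by omega
    have hEmeas : ∀ i : Fin n, MeasurableSet (ξ i ⁻¹' Set.Ici (x (4*k))) := fun i =>
      (hmeas i) measurableSet_Ici
    have hXmeas : ∀ i, Measurable (Xf k i) := fun i =>
      measurable_const.indicator (hEmeas i)
    have hXindep : iIndepFun (m := fun _ => inferInstance) (Xf k) P := by
      have h := hindep.comp (fun _ => Set.indicator (Set.Ici (x (4*k))) (fun _ => (1:ℝ)))
        (fun _ => measurable_const.indicator measurableSet_Ici)
      convert h using 2 with i
      rfl
    -- sum of probabilities is at least 4k+1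
    have hstep : ∀ i : Fin n,
        ∑ j ∈ Finset.range (4*k+1), P {t : ℝ | ξ i t = x j} ≤ P (ξ i ⁻¹' Set.Ici (x (4*k))) := by
      intro i
      have hdisj : ((Finset.range (4*k+1)) : Set ℕ).PairwiseDisjoint
          (fun j => {t : ℝ | ξ i t = x j}) := by
        intro a ha b hb hab
        have hxab : x a ≠ x b := by
          intro hxe
          exact hab (hx_inj (by simp at ha ⊢; omega) (by simp at hb ⊢; omega) hxe)
        simp only [Function.onFun, Set.disjoint_left]
        rintro t (ht : ξ i t = x a) (ht' : ξ i t = x b)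
        exact hxab (ht ▸ ht')
      rw [← measure_biUnion_finset hdisj (fun j _ => hmeasP i (x j))]
      apply measure_mono
      intro t ht
      simp only [Set.mem_iUnion] at ht
      obtain ⟨j, hj, (hje : ξ i t = x j)⟩ := ht
      have hjle : j ≤ 4*k := by have := Finset.mem_range.mp hj; omega
      show x (4*k) ≤ ξ i t
      rw [hje]
      exact hxmono j (4*k) hjle h4k
    have hsumE : ((4*k+1 : ℕ) : ℝ≥0∞) ≤ ∑ i : Fin n, P (ξ i ⁻¹' Set.Ici (x (4*k))) := by
      calc ((4*k+1:ℕ) : ℝ≥0∞)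
          = ∑ j ∈ Finset.range (4*k+1), ∑ i : Fin n, P {t : ℝ | ξ i t = x j} := by
            rw [Finset.sum_congr rfl (fun j hj => hdistr j
              (by have := Finset.mem_range.mp hj; omega))]
            simp
        _ = ∑ i : Fin n, ∑ j ∈ Finset.range (4*k+1), P {t : ℝ | ξ i t = x j} :=
            Finset.sum_comm
        _ ≤ ∑ i : Fin n, P (ξ i ⁻¹' Set.Ici (x (4*k))) := Finset.sum_le_sum fun i _ => hstep i
    have hsum_p : (4 * (k:ℝ) + 1) ≤ ∑ i : Fin n, (P (ξ i ⁻¹' Set.Ici (x (4*k)))).toReal := by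
      have hfin : ∑ i : Fin n, P (ξ i ⁻¹' Set.Ici (x (4*k))) ≠ ⊤ := by
        exact (lt_of_le_of_lt (Finset.sum_le_sum fun (i : Fin n) _ =>
          measure_mono (Set.subset_univ _)) (by simp)).ne
      have h1 := ENNReal.toReal_mono hfin hsumE
      rw [ENNReal.toReal_sum (fun i _ => measure_ne_top P _)] at h1
      rw [ENNReal.toReal_natCast] at h1
      push_cast at h1
      linarith
    -- mgf of each indicator
    have hrw : ∀ i : Fin n, (fun t => Real.exp (-1 * Xf k i t)) = fun t =>
        1 + (Real.exp (-1) - 1) *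
          Set.indicator (ξ i ⁻¹' Set.Ici (x (4*k))) (fun _ => (1:ℝ)) t := by
      intro i
      funext t
      by_cases ht : t ∈ ξ i ⁻¹' Set.Ici (x (4*k))
      · simp [hXf, Set.indicator_of_mem ht]
      · simp [hXf, Set.indicator_of_notMem ht]
    have hint : ∀ i : Fin n, Integrable (fun t => Real.exp (-1 * Xf k i t)) P := by
      intro i
      rw [hrw i]
      exact (integrable_const 1).add
        (((integrable_const (1:ℝ)).indicator (hEmeas i)).const_mul _)
    have hmgf_eq : ∀ i : Fin n, mgf (Xf k i) P (-1) =
        1 + (Real.exp (-1) - 1) * (P (ξ i ⁻¹' Set.Ici (x (4*k)))).toReal := by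
      intro i
      show ∫ t, Real.exp (-1 * Xf k i t) ∂P = _
      rw [hrw i]
      rw [integral_add (integrable_const 1)
        (((integrable_const (1:ℝ)).indicator (hEmeas i)).const_mul _)]
      rw [integral_const_mul, integral_indicator_const (1:ℝ) (hEmeas i)]
      simp [measure_univ, measureReal_def]
    -- Chernoff
    have hS_int : Integrable (fun ω => Real.exp (-1 * (∑ i : Fin n, Xf k i) ω)) P :=
      hXindep.integrable_exp_mul_sum hXmeas (fun i _ => hint i)
    have hcher := measure_le_le_exp_mul_mgf (μ := P) (X := ∑ i : Fin n, Xf k i) ((k:ℝ))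
      (by norm_num : (-1:ℝ) ≤ 0) hS_int
    rw [hXindep.mgf_sum hXmeas Finset.univ] at hcher
    have hprod : ∏ i : Fin n, mgf (Xf k i) P (-1) ≤
        Real.exp (-(1 - Real.exp (-1)) * (4*(k:ℝ)+1)) := by
      calc ∏ i : Fin n, mgf (Xf k i) P (-1)
          ≤ ∏ i : Fin n,
            Real.exp (-(1 - Real.exp (-1)) * (P (ξ i ⁻¹' Set.Ici (x (4*k)))).toReal) := by
            refine Finset.prod_le_prod (fun i _ => mgf_nonneg) (fun i _ => ?_)
            rw [hmgf_eq i]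
            have := Real.add_one_le_exp
              (-(1 - Real.exp (-1)) * (P (ξ i ⁻¹' Set.Ici (x (4*k)))).toReal)
            linarith
        _ = Real.exp (∑ i : Fin n,
              -(1 - Real.exp (-1)) * (P (ξ i ⁻¹' Set.Ici (x (4*k)))).toReal) :=
            (Real.exp_sum _ _).symm
        _ ≤ Real.exp (-(1 - Real.exp (-1)) * (4*(k:ℝ)+1)) := by
            apply Real.exp_le_exp.mpr
            rw [← Finset.mul_sum]
            have h1 : 0 ≤ 1 - Real.exp (-1) := by nlinarith
            nlinarith
    have hfinal : (P {t : ℝ | (∑ i : Fin n, Xf k i) t ≤ (k:ℝ)}).toReal ≤ 0.58 * 0.33 ^ k := by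
      have h1 : (P {t : ℝ | (∑ i : Fin n, Xf k i) t ≤ (k:ℝ)}).toReal ≤
          Real.exp ((k:ℝ) + -(1 - Real.exp (-1)) * (4*(k:ℝ)+1)) := by
        rw [Real.exp_add]
        refine le_trans hcher ?_
        have : Real.exp (-(-1) * (k:ℝ)) = Real.exp ((k:ℝ)) := by norm_num
        rw [this]
        exact mul_le_mul_of_nonneg_left hprod (Real.exp_nonneg _)
      have h2 : (k:ℝ) + -(1 - Real.exp (-1)) * (4*(k:ℝ)+1) ≤ -0.63 + (k:ℝ) * (-1.52) := by
        have hknn : (0:ℝ) ≤ (k:ℝ) := Nat.cast_nonneg k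
        nlinarith
      have h3 : Real.exp ((k:ℝ) + -(1 - Real.exp (-1)) * (4*(k:ℝ)+1)) ≤
          Real.exp (-0.63) * Real.exp (-1.52) ^ k := by
        rw [← Real.exp_nat_mul, ← Real.exp_add]
        exact Real.exp_le_exp.mpr (by push_cast; linarith)
      have h4 : Real.exp (-0.63) * Real.exp (-1.52) ^ k ≤ 0.58 * 0.33 ^ k := by
        have := pow_le_pow_left₀ (Real.exp_nonneg (-1.52)) h33 k
        have h0 : (0:ℝ) ≤ 0.33 ^ k := by positivity
        nlinarith [Real.exp_nonneg (-0.63), pow_nonneg (Real.exp_nonneg (-1.52)) k]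
      linarith
    rw [← ENNReal.ofReal_toReal (measure_ne_top P _)]
    exact ENNReal.ofReal_le_ofReal hfinal
  -- assembly
  set T : Set ℝ :=
    {t : ℝ | ∀ k : ℕ, k < (n + 3) / 4 → x (4 * k) ≤ tupleMu (fun i => ξ i t) k} with hT
  set U : Set ℝ :=
    ⋃ k ∈ Finset.range ((n+3)/4), {t : ℝ | (∑ i : Fin n, Xf k i) t ≤ (k:ℝ)} with hU
  have hcover : Set.Ioo (0:ℝ) 1 ⊆ T ∪ U := by
    intro t ht
    by_cases hgood : ∀ k : ℕ, k < (n + 3) / 4 → x (4 * k) ≤ tupleMu (fun i => ξ i t) k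
    · exact Or.inl hgood
    · push_neg at hgood
      obtain ⟨k, hk, hlt⟩ := hgood
      refine Or.inr ?_
      rw [hU]
      refine Set.mem_biUnion (Finset.mem_range.mpr hk) ?_
      show (∑ i : Fin n, Xf k i) t ≤ (k:ℝ)
      have hcard := tupleMu_lt_imp (fun i => ξ i t) k (x (4*k)) hlt
      have hsum : (∑ i : Fin n, Xf k i) t
          = ((Finset.univ.filter fun i : Fin n => x (4*k) ≤ ξ i t).card : ℝ) := by
        rw [Finset.sum_apply, hXf]
        simp only [Set.indicator_apply, Set.mem_preimage, Set.mem_Ici]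
        rw [Finset.sum_boole]
      rw [hsum]
      exact_mod_cast Nat.cast_le.mpr hcard
  have hU_le : P U ≤ ENNReal.ofReal 0.87 := by
    rw [hU]
    refine le_trans (measure_biUnion_finset_le _ _) ?_
    calc ∑ k ∈ Finset.range ((n+3)/4), P {t : ℝ | (∑ i : Fin n, Xf k i) t ≤ (k:ℝ)}
        ≤ ∑ k ∈ Finset.range ((n+3)/4), ENNReal.ofReal (0.58 * 0.33 ^ k) :=
          Finset.sum_le_sum fun k hk => hbound k (Finset.mem_range.mp hk)
      _ = ENNReal.ofReal (∑ k ∈ Finset.range ((n+3)/4), 0.58 * 0.33 ^ k) :=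
          (ENNReal.ofReal_sum_of_nonneg (fun k _ => by positivity)).symm
      _ ≤ ENNReal.ofReal 0.87 := by
          apply ENNReal.ofReal_le_ofReal
          rw [← Finset.mul_sum]
          have hg : ∑ k ∈ Finset.range ((n+3)/4), (0.33:ℝ)^k
              = ((0.33:ℝ)^((n+3)/4) - 1)/(0.33 - 1) := geom_sum_eq (by norm_num) _
          have h0 : (0:ℝ) ≤ 0.33 ^ ((n+3)/4) := by positivity
          have h1 : (0.33:ℝ) ^ ((n+3)/4) ≤ 1 := pow_le_one₀ (by norm_num) (by norm_num)
          rw [hg, show ((0.33:ℝ)^((n+3)/4) - 1)/(0.33-1)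
            = (1 - 0.33^((n+3)/4))/0.67 from by ring]
          have h2 : (1 - (0.33:ℝ)^((n+3)/4))/0.67 ≤ 1.5 := by
            rw [div_le_iff₀ (by norm_num : (0:ℝ) < 0.67)]
            linarith
          calc (0.58:ℝ) * ((1 - 0.33^((n+3)/4))/0.67) ≤ 0.58 * 1.5 :=
                mul_le_mul_of_nonneg_left h2 (by norm_num)
            _ = 0.87 := by norm_num
  have hfinal : (1:ℝ≥0∞) ≤ P T + ENNReal.ofReal 0.87 :=
    calc (1:ℝ≥0∞) = P (Set.Ioo 0 1) := hIoo.symm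
      _ ≤ P (T ∪ U) := measure_mono hcover
      _ ≤ P T + P U := measure_union_le _ _
      _ ≤ P T + ENNReal.ofReal 0.87 := add_le_add_right hU_le _
  have h13 : ENNReal.ofReal 0.13 ≤ P T := by
    have hsub : (1:ℝ≥0∞) - ENNReal.ofReal 0.87 ≤ P T := tsub_le_iff_right.mpr hfinal
    calc ENNReal.ofReal 0.13 = 1 - ENNReal.ofReal 0.87 := by
          rw [← ENNReal.ofReal_one, ← ENNReal.ofReal_sub 1 (by norm_num : (0:ℝ) ≤ 0.87)]
          norm_num
      _ ≤ P T := hsub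
  exact lt_of_lt_of_le ((ENNReal.ofReal_lt_ofReal_iff (by norm_num)).mpr (by norm_num)) h13
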